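/- Consider the planar system ẋ₁ = −x₁, ẋ₂ = −x₂ − x₁x₂, and let δ ∈ (0, 1). Let x be any trajectory of this system on [t₀, T] with x₁(t₀) ≥ −δ. Then: (i) x₁(t) ≥ −δ for every t ∈ [t₀, T] (the half-space {x ∈ ℝ² : x₁ ≥ −δ} is forward invariant); and (ii) |x(t)|₁ ≤ e^{(δ−1)(t−t₀)} |x(t₀)|₁ for every t ∈ [t₀, T], where |x|₁ = |x₁| + |x₂| is the ℓ₁ norm. In particular, since δ − 1 < 0, the origin is exponentially stable with region of attraction containing {x : x₁ ≥ −δ}. -/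

import Mathlib

open Filter Topology Set Matrix

private lemma const_aux {a b : ℝ} {f : ℝ → ℝ} (hc : ContinuousOn f (Icc a b))
    (hd : ∀ t ∈ Ioo a b, HasDerivAt f 0 t) : ∀ t ∈ Icc a b, f t = f a := by
  have hdiff : DifferentiableOn ℝ f (interior (Icc a b)) := by
    rw [interior_Icc]; exact fun t htI => (hd t htI).differentiableAt.differentiableWithinAt
  have hmono : MonotoneOn f (Icc a b) :=
    monotoneOn_of_deriv_nonneg (convex_Icc a b) hc hdiff (by
      rw [interior_Icc]; intro t htI; rw [(hd t htI).deriv])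
  have hanti : AntitoneOn f (Icc a b) :=
    antitoneOn_of_deriv_nonpos (convex_Icc a b) hc hdiff (by
      rw [interior_Icc]; intro t htI; rw [(hd t htI).deriv])
  intro t htI
  have ha : a ∈ Icc a b := ⟨le_refl a, htI.1.trans htI.2⟩
  exact le_antisymm (hanti ha htI htI.1) (hmono ha htI htI.1)

theorem stmt17 (δ : ℝ) (hδ : δ ∈ Ioo (0:ℝ) 1) (t₀ T : ℝ) (ht : t₀ ≤ T)
    (x : ℝ → Fin 2 → ℝ) (hxc : ContinuousOn x (Icc t₀ T))
    (hxd : ∀ t ∈ Ioo t₀ T, HasDerivAt x ![-(x t 0), -(x t 1) - x t 0 * x t 1] t)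
    (h0 : -δ ≤ x t₀ 0) :
    (∀ t ∈ Icc t₀ T, -δ ≤ x t 0) ∧
    (∀ t ∈ Icc t₀ T,
      |x t 0| + |x t 1| ≤ Real.exp ((δ - 1) * (t - t₀)) * (|x t₀ 0| + |x t₀ 1|)) := by
  set c := x t₀ 0 with hc
  have hd0 : ∀ t ∈ Ioo t₀ T, HasDerivAt (fun s => x s 0) (-(x t 0)) t := by
    intro t htI
    have := (hasDerivAt_pi.1 (hxd t htI)) 0
    simpa using this
  have hd1 : ∀ t ∈ Ioo t₀ T, HasDerivAt (fun s => x s 1) (-(x t 1) - x t 0 * x t 1) t := by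
    intro t htI
    have := (hasDerivAt_pi.1 (hxd t htI)) 1
    simpa using this
  have hc0 : ContinuousOn (fun s => x s 0) (Icc t₀ T) :=
    fun t htI => ((continuous_apply (0:Fin 2)).continuousAt.comp_continuousWithinAt (hxc t htI))
  have hc1 : ContinuousOn (fun s => x s 1) (Icc t₀ T) :=
    fun t htI => ((continuous_apply (1:Fin 2)).continuousAt.comp_continuousWithinAt (hxc t htI))
  -- explicit solution for component 0
  have key0 : ∀ t ∈ Icc t₀ T, x t 0 = c * Real.exp (-(t - t₀)) := by
    have hg : ∀ t ∈ Icc t₀ T, x t 0 * Real.exp (t - t₀) = c := by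
      have := const_aux (f := fun s => x s 0 * Real.exp (s - t₀))
        (hc0.mul (Real.continuous_exp.comp (continuous_id.sub continuous_const)).continuousOn)
        (fun t htI => by
          have h1 : HasDerivAt (fun s : ℝ => Real.exp (s - t₀)) (Real.exp (t - t₀)) t := by
            simpa using ((hasDerivAt_id t).sub_const t₀).exp
          have h2 := (hd0 t htI).mul h1
          refine h2.congr_deriv ?_
          ring)
      intro t htI
      simpa using this t htI
    intro t htI
    have h := hg t htI
    have hE : (0:ℝ) < Real.exp (t - t₀) := Real.exp_pos _
    rw [Real.exp_neg]
    field_simp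
    linarith [h]
  -- part (i)
  have part1 : ∀ t ∈ Icc t₀ T, -δ ≤ x t 0 := by
    intro t htI
    rw [key0 t htI]
    have hEpos : (0:ℝ) < Real.exp (-(t - t₀)) := Real.exp_pos _
    have hEle : Real.exp (-(t - t₀)) ≤ 1 := by
      rw [Real.exp_le_one_iff]; linarith [htI.1]
    rcases le_or_gt 0 c with hcpos | hcneg
    · nlinarith [hδ.1]
    · nlinarith
  refine ⟨part1, ?_⟩
  -- integrating factor for component 1
  set φ : ℝ → ℝ := fun s => (s - t₀) + c * (1 - Real.exp (-(s - t₀))) with hφ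
  have hφd : ∀ t : ℝ, HasDerivAt φ (1 + c * Real.exp (-(t - t₀))) t := by
    intro t
    have h1 : HasDerivAt (fun s : ℝ => s - t₀) 1 t := (hasDerivAt_id t).sub_const t₀
    have h2 : HasDerivAt (fun s : ℝ => Real.exp (-(s - t₀))) (-Real.exp (-(t - t₀))) t := by
      simpa using (h1.neg).exp
    have h3 := h1.add (((hasDerivAt_const t (1:ℝ)).sub h2).const_mul c)
    refine h3.congr_deriv ?_
    ring
  have hφc : Continuous φ := by
    have := fun t => (hφd t).differentiableAt
    exact Differentiable.continuous this
  have key1 : ∀ t ∈ Icc t₀ T, x t 1 * Real.exp (φ t) = x t₀ 1 := by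
    have := const_aux (f := fun s => x s 1 * Real.exp (φ s))
      (hc1.mul (Real.continuous_exp.comp hφc).continuousOn)
      (fun t htI => by
        have hE : HasDerivAt (fun s => Real.exp (φ s)) (Real.exp (φ t) * (1 + c * Real.exp (-(t - t₀)))) t := by
          simpa [mul_comm] using (hφd t).exp
        have hmul := (hd1 t htI).mul hE
        have hx0 : x t 0 = c * Real.exp (-(t - t₀)) := key0 t (Ioo_subset_Icc_self htI)
        refine hmul.congr_deriv ?_
        rw [hx0]; ring)
    intro t htI
    have h := this t htI
    simpa [hφ] using h
  -- final estimate
  intro t htI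
  have hu : 0 ≤ t - t₀ := by linarith [htI.1]
  have hE1 : Real.exp (-(t - t₀)) ≤ 1 := by rw [Real.exp_le_one_iff]; linarith
  have hEpos : (0:ℝ) < Real.exp (-(t - t₀)) := Real.exp_pos _
  have hexp : Real.exp (-(t - t₀)) ≤ Real.exp ((δ - 1) * (t - t₀)) := by
    rw [Real.exp_le_exp]; nlinarith [hδ.1]
  have b0 : |x t 0| ≤ Real.exp ((δ - 1) * (t - t₀)) * |c| := by
    rw [key0 t htI, abs_mul, abs_of_pos hEpos]
    calc |c| * Real.exp (-(t - t₀)) ≤ |c| * Real.exp ((δ - 1) * (t - t₀)) :=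
          mul_le_mul_of_nonneg_left hexp (abs_nonneg c)
      _ = _ := mul_comm _ _
  have b1 : |x t 1| ≤ Real.exp ((δ - 1) * (t - t₀)) * |x t₀ 1| := by
    have h := key1 t htI
    have hxE : x t 1 = x t₀ 1 * Real.exp (-(φ t)) := by
      have hE : (0:ℝ) < Real.exp (φ t) := Real.exp_pos _
      rw [Real.exp_neg]
      field_simp
      linarith [h]
    rw [hxE, abs_mul, abs_of_pos (Real.exp_pos _)]
    have hle : Real.exp (-(φ t)) ≤ Real.exp ((δ - 1) * (t - t₀)) := by
      rw [Real.exp_le_exp]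
      have h1 : 1 - Real.exp (-(t - t₀)) ≤ t - t₀ := by
        linarith [Real.add_one_le_exp (-(t - t₀))]
      have h2 : 0 ≤ 1 - Real.exp (-(t - t₀)) := by linarith
      have h3 : -δ * (1 - Real.exp (-(t - t₀))) ≤ c * (1 - Real.exp (-(t - t₀))) :=
        mul_le_mul_of_nonneg_right h0 h2
      have h4 : δ * (1 - Real.exp (-(t - t₀))) ≤ δ * (t - t₀) :=
        mul_le_mul_of_nonneg_left h1 (le_of_lt hδ.1)
      simp only [hφ]
      nlinarith
    calc |x t₀ 1| * Real.exp (-(φ t)) ≤ |x t₀ 1| * Real.exp ((δ - 1) * (t - t₀)) :=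
          mul_le_mul_of_nonneg_left hle (abs_nonneg _)
      _ = _ := mul_comm _ _
  calc |x t 0| + |x t 1|
      ≤ Real.exp ((δ - 1) * (t - t₀)) * |c| + Real.exp ((δ - 1) * (t - t₀)) * |x t₀ 1| := by
        linarith
    _ = Real.exp ((δ - 1) * (t - t₀)) * (|x t₀ 0| + |x t₀ 1|) := by rw [hc]; ring
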